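/- For every integer n ≥ 1 and every pair of symmetric d×d real matrices S, R, one has (S|S|^{1/n − 1} − R|R|^{1/n − 1}) : (S − R) ≥ (1/n)·|S − R|²/(|R| + |S − R|)^{1 − 1/n}, where the convention 0·|0|^{1/n−1}=0 is used and 0/0^{1−1/n} is interpreted as 0. -/

import Mathlib

/-- The Frobenius norm of a real matrix. -/
noncomputable def fnorm {d : ℕ} (A : Matrix (Fin d) (Fin d) ℝ) : ℝ :=
  Real.sqrt (∑ i, ∑ j, (A i j) ^ 2)

/-- The Frobenius inner product `A : B` of two real matrices. -/
def finner {d : ℕ} (A B : Matrix (Fin d) (Fin d) ℝ) : ℝ :=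
  ∑ i, ∑ j, A i j * B i j

/-- Auxiliary: view a matrix as a vector in Euclidean space. -/
noncomputable def mto9 {d : ℕ} (A : Matrix (Fin d) (Fin d) ℝ) :
    EuclideanSpace ℝ (Fin d × Fin d) := WithLp.toLp 2 (fun x : Fin d × Fin d => A x.1 x.2)

lemma fnorm_eq_norm9 {d : ℕ} (A : Matrix (Fin d) (Fin d) ℝ) :
    fnorm A = ‖mto9 A‖ := by
  rw [EuclideanSpace.norm_eq]
  simp [fnorm, mto9, Fintype.sum_prod_type, Real.norm_eq_abs, sq_abs]

lemma finner_eq_inner9 {d : ℕ} (A B : Matrix (Fin d) (Fin d) ℝ) :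
    finner A B = inner ℝ (mto9 A) (mto9 B) := by
  simp [finner, mto9, PiLp.inner_apply, RCLike.inner_apply, conj_trivial,
    Fintype.sum_prod_type, mul_comm]

/-- Bernoulli-type inequality: `p·y^{p-1}(y - x) ≤ y^p - x^p` for `0 < p ≤ 1`. -/
lemma bern9 {p x y : ℝ} (hp0 : 0 < p) (hp1 : p ≤ 1) (hx : 0 ≤ x) (hy : 0 < y) :
    p * y ^ (p - 1) * (y - x) ≤ y ^ p - x ^ p := by
  have hgm : (x / y) ^ p * (1:ℝ) ^ (1 - p) ≤ p * (x / y) + (1 - p) * 1 :=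
    Real.geom_mean_le_arith_mean2_weighted hp0.le (by linarith) (div_nonneg hx hy.le)
      zero_le_one (by ring)
  have h3 : (x / y) ^ p ≤ p * (x / y) + (1 - p) := by simpa using hgm
  have h1 : (x / y) ^ p * y ^ p = x ^ p := by
    rw [← Real.mul_rpow (div_nonneg hx hy.le) hy.le, div_mul_cancel₀ _ hy.ne']
  have h2 : y ^ (p - 1) * y = y ^ p := by
    rw [← Real.rpow_add_one hy.ne' (p - 1)]; norm_num
  have h6 : (x / y) * y ^ p = x * y ^ (p - 1) := by
    rw [Real.rpow_sub hy, Real.rpow_one]; ring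
  have h5 := mul_le_mul_of_nonneg_right h3 (Real.rpow_nonneg hy.le p)
  rw [h1] at h5
  have h8 : p * (y ^ (p - 1) * y) = p * y ^ p := by rw [h2]
  nlinarith [h5, h6, h8]

set_option maxHeartbeats 1000000 in
/-- The key scalar inequality. -/
lemma key9 (p a b c w : ℝ) (hp0 : 0 < p) (hp1 : p ≤ 1)
    (ha : 0 ≤ a) (hb : 0 ≤ b) (hc : 0 ≤ c)
    (hw : |w| ≤ a * b)
    (t1 : a ≤ b + c) (t2 : b ≤ a + c) (t3 : c ≤ a + b)
    (hpy : c ^ 2 = a ^ 2 + b ^ 2 - 2 * w) :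
    p * c ^ 2 / (b + c) ^ (1 - p) ≤ a ^ (p - 1) * (a ^ 2 - w) + b ^ (p - 1) * (b ^ 2 - w) := by
  have hw1 : w ≤ a * b := le_trans (le_abs_self w) hw
  have hw2 : -(a * b) ≤ w := neg_le_of_abs_le hw
  rcases hc.eq_or_lt with h0 | hcpos
  · -- c = 0 : then a = b, w = a², both sides 0
    have hc0 : c = 0 := h0.symm
    have hab : a = b := le_antisymm (by linarith) (by linarith)
    have hwa : w = a ^ 2 := by nlinarith [hpy]
    rw [hc0]
    simp [hwa, hab]
  · -- c > 0
    have hMpos : (0:ℝ) < b + c := by linarith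
    have hdiv : p * c ^ 2 / (b + c) ^ (1 - p) = p * c ^ 2 * (b + c) ^ (p - 1) := by
      rw [show p - 1 = -(1 - p) by ring, Real.rpow_neg hMpos.le, div_eq_mul_inv]
    rw [hdiv]
    have hun : -(a * c) ≤ a ^ 2 - w := by nlinarith [t2]
    have hvn : -(b * c) ≤ b ^ 2 - w := by nlinarith [t1]
    by_cases hu : 0 ≤ a ^ 2 - w
    · by_cases hv : 0 ≤ b ^ 2 - w
      · -- Case A
        have hua : a ^ 2 - w ≤ a * c := by nlinarith [t1, t3]
        have hvb : b ^ 2 - w ≤ b * c := by nlinarith [t2, t3]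
        have hau : (b + c) ^ (p - 1) * (a ^ 2 - w) ≤ a ^ (p - 1) * (a ^ 2 - w) := by
          rcases hu.eq_or_lt with h | h
          · rw [← h]; simp
          · have hap : 0 < a := by nlinarith
            exact mul_le_mul_of_nonneg_right
              (Real.rpow_le_rpow_of_nonpos hap (by linarith) (by linarith)) hu
        have hbv : (b + c) ^ (p - 1) * (b ^ 2 - w) ≤ b ^ (p - 1) * (b ^ 2 - w) := by
          rcases hv.eq_or_lt with h | h
          · rw [← h]; simp
          · have hbp : 0 < b := by nlinarith
            exact mul_le_mul_of_nonneg_right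
              (Real.rpow_le_rpow_of_nonpos hbp (by linarith) (by linarith)) hv
        have hQ : 0 ≤ (b + c) ^ (p - 1) := Real.rpow_nonneg hMpos.le _
        have hQc : (b + c) ^ (p - 1) * (a ^ 2 - w) + (b + c) ^ (p - 1) * (b ^ 2 - w) =
            (b + c) ^ (p - 1) * c ^ 2 := by
          have h : (a ^ 2 - w) + (b ^ 2 - w) = c ^ 2 := by linarith
          calc (b + c) ^ (p - 1) * (a ^ 2 - w) + (b + c) ^ (p - 1) * (b ^ 2 - w)
              = (b + c) ^ (p - 1) * ((a ^ 2 - w) + (b ^ 2 - w)) := by ring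
            _ = (b + c) ^ (p - 1) * c ^ 2 := by rw [h]
        have htr : 0 ≤ (1 - p) * ((b + c) ^ (p - 1) * c ^ 2) :=
          mul_nonneg (by linarith) (mul_nonneg hQ (sq_nonneg c))
        linarith [hau, hbv, hQc, htr]
      · -- Case B : v < 0
        push_neg at hv
        have hb0 : 0 < b := by
          rcases hb.eq_or_lt with h | h
          · exfalso; have : w = 0 := by
              have h' : |w| ≤ 0 := by rw [← h] at hw; simpa using hw
              exact abs_eq_zero.mp (le_antisymm h' (abs_nonneg w))
            nlinarith
          · exact h
        have hab : b ≤ a := by nlinarith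
        have ha0 : 0 < a := lt_of_lt_of_le hb0 hab
        have hba : a ^ (p - 1) ≤ b ^ (p - 1) :=
          Real.rpow_le_rpow_of_nonpos hb0 hab (by linarith)
        have haM : (b + c) ^ (p - 1) ≤ a ^ (p - 1) :=
          Real.rpow_le_rpow_of_nonpos ha0 (by linarith) (by linarith)
        have f1 : (b ^ (p - 1) - a ^ (p - 1)) * (-(b * c)) ≤
            (b ^ (p - 1) - a ^ (p - 1)) * (b ^ 2 - w) :=
          mul_le_mul_of_nonneg_left hvn (by linarith)
        have f2 : (b + c) ^ (p - 1) * (c * (b + c)) ≤ a ^ (p - 1) * (c * (b + c)) :=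
          mul_le_mul_of_nonneg_right haM (by positivity)
        have fb := bern9 hp0 hp1 hb hMpos
        have f4 : c * (p * (b + c) ^ (p - 1) * ((b + c) - b)) ≤ c * ((b + c) ^ p - b ^ p) :=
          mul_le_mul_of_nonneg_left fb hc
        have hbp : b ^ (p - 1) * b = b ^ p := by
          rw [← Real.rpow_add_one hb0.ne' (p - 1)]; norm_num
        have hbpc : b ^ (p - 1) * b * c = b ^ p * c := by rw [hbp]
        have hMp : (b + c) ^ (p - 1) * (b + c) = (b + c) ^ p := by
          rw [← Real.rpow_add_one hMpos.ne' (p - 1)]; norm_num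
        have hMpc : (b + c) ^ (p - 1) * (b + c) * c = (b + c) ^ p * c := by rw [hMp]
        have hpyA : a ^ (p - 1) * (a ^ 2 - w) = a ^ (p - 1) * (c ^ 2 - (b ^ 2 - w)) := by
          rw [show a ^ 2 - w = c ^ 2 - (b ^ 2 - w) by linarith]
        linarith [f1, f2, f4, hbpc, hMpc, hpyA]
    · -- Case C : u < 0
      push_neg at hu
      have ha0 : 0 < a := by
        rcases ha.eq_or_lt with h | h
        · exfalso; have : w = 0 := by
            have h' : |w| ≤ 0 := by rw [← h] at hw; simpa using hw
            exact abs_eq_zero.mp (le_antisymm h' (abs_nonneg w))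
          nlinarith
        · exact h
      have hab : a ≤ b := by nlinarith
      have hb0 : 0 < b := lt_of_lt_of_le ha0 hab
      have hba : b ^ (p - 1) ≤ a ^ (p - 1) :=
        Real.rpow_le_rpow_of_nonpos ha0 hab (by linarith)
      have hacpos : (0:ℝ) < a + c := by linarith
      have hbac : (a + c) ^ (p - 1) ≤ b ^ (p - 1) :=
        Real.rpow_le_rpow_of_nonpos hb0 t2 (by linarith)
      have hQle : (b + c) ^ (p - 1) ≤ (a + c) ^ (p - 1) :=
        Real.rpow_le_rpow_of_nonpos hacpos (by linarith) (by linarith)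
      have f1 : (a ^ (p - 1) - b ^ (p - 1)) * (-(a * c)) ≤
          (a ^ (p - 1) - b ^ (p - 1)) * (a ^ 2 - w) :=
        mul_le_mul_of_nonneg_left hun (by linarith)
      have f2 : (a + c) ^ (p - 1) * (c * (a + c)) ≤ b ^ (p - 1) * (c * (a + c)) :=
        mul_le_mul_of_nonneg_right hbac (by positivity)
      have fb := bern9 hp0 hp1 ha hacpos
      have f4 : c * (p * (a + c) ^ (p - 1) * ((a + c) - a)) ≤ c * ((a + c) ^ p - a ^ p) :=
        mul_le_mul_of_nonneg_left fb hc
      have f5 : p * c ^ 2 * (b + c) ^ (p - 1) ≤ p * c ^ 2 * (a + c) ^ (p - 1) :=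
        mul_le_mul_of_nonneg_left hQle (by positivity)
      have hap : a ^ (p - 1) * a = a ^ p := by
        rw [← Real.rpow_add_one ha0.ne' (p - 1)]; norm_num
      have hapc : a ^ (p - 1) * a * c = a ^ p * c := by rw [hap]
      have hAp : (a + c) ^ (p - 1) * (a + c) = (a + c) ^ p := by
        rw [← Real.rpow_add_one hacpos.ne' (p - 1)]; norm_num
      have hApc : (a + c) ^ (p - 1) * (a + c) * c = (a + c) ^ p * c := by rw [hAp]
      have hpyB : b ^ (p - 1) * (b ^ 2 - w) = b ^ (p - 1) * (c ^ 2 - (a ^ 2 - w)) := by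
        rw [show b ^ 2 - w = c ^ 2 - (a ^ 2 - w) by linarith]
      linarith [f1, f2, f4, f5, hapc, hApc, hpyB]

/-- For `n ≥ 1` and symmetric matrices `S, R`:
`(S|S|^{1/n−1} − R|R|^{1/n−1}) : (S − R) ≥ (1/n)·|S−R|²/(|R|+|S−R|)^{1−1/n}`. -/
theorem stmt_9 (d n : ℕ) (hd : 1 ≤ d) (hn : 1 ≤ n)
    (S R : Matrix (Fin d) (Fin d) ℝ) (hS : S.IsSymm) (hR : R.IsSymm) :
    ((1 : ℝ) / n) * fnorm (S - R) ^ 2 / (fnorm R + fnorm (S - R)) ^ (1 - (1 : ℝ) / n) ≤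
      finner ((fnorm S ^ ((1 : ℝ) / n - 1)) • S - (fnorm R ^ ((1 : ℝ) / n - 1)) • R)
        (S - R) := by
  have hn' : (1:ℝ) ≤ (n:ℝ) := by exact_mod_cast hn
  have hp0 : 0 < (1:ℝ) / n := div_pos one_pos (by linarith)
  have hp1 : (1:ℝ) / n ≤ 1 := by
    rw [div_le_one (by linarith)]; exact hn'
  have ha : 0 ≤ fnorm S := by rw [fnorm_eq_norm9]; exact norm_nonneg _
  have hb : 0 ≤ fnorm R := by rw [fnorm_eq_norm9]; exact norm_nonneg _
  have hc : 0 ≤ fnorm (S - R) := by rw [fnorm_eq_norm9]; exact norm_nonneg _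
  have hsub : mto9 (S - R) = mto9 S - mto9 R := rfl
  have hw : |finner S R| ≤ fnorm S * fnorm R := by
    rw [finner_eq_inner9, fnorm_eq_norm9, fnorm_eq_norm9]
    exact abs_real_inner_le_norm _ _
  have t1 : fnorm S ≤ fnorm R + fnorm (S - R) := by
    rw [fnorm_eq_norm9, fnorm_eq_norm9, fnorm_eq_norm9, hsub]
    simpa using norm_add_le (mto9 R) (mto9 S - mto9 R)
  have t2 : fnorm R ≤ fnorm S + fnorm (S - R) := by
    rw [fnorm_eq_norm9, fnorm_eq_norm9, fnorm_eq_norm9, hsub]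
    simpa [norm_sub_rev] using norm_add_le (mto9 S) (mto9 R - mto9 S)
  have t3 : fnorm (S - R) ≤ fnorm S + fnorm R := by
    rw [fnorm_eq_norm9, fnorm_eq_norm9, fnorm_eq_norm9, hsub]
    exact norm_sub_le _ _
  have hpy : fnorm (S - R) ^ 2 = fnorm S ^ 2 + fnorm R ^ 2 - 2 * finner S R := by
    rw [fnorm_eq_norm9, fnorm_eq_norm9, fnorm_eq_norm9, hsub, finner_eq_inner9,
      norm_sub_sq_real]
    ring
  have hE : finner ((fnorm S ^ ((1 : ℝ) / n - 1)) • S - (fnorm R ^ ((1 : ℝ) / n - 1)) • R)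
      (S - R) = fnorm S ^ ((1 : ℝ) / n - 1) * (fnorm S ^ 2 - finner S R) +
        fnorm R ^ ((1 : ℝ) / n - 1) * (fnorm R ^ 2 - finner S R) := by
    rw [finner_eq_inner9,
      show mto9 ((fnorm S ^ ((1 : ℝ) / n - 1)) • S - (fnorm R ^ ((1 : ℝ) / n - 1)) • R) =
        (fnorm S ^ ((1 : ℝ) / n - 1)) • mto9 S - (fnorm R ^ ((1 : ℝ) / n - 1)) • mto9 R
        from rfl, hsub, finner_eq_inner9, fnorm_eq_norm9 S, fnorm_eq_norm9 R]
    rw [inner_sub_left, inner_sub_right, inner_sub_right, real_inner_smul_left,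
      real_inner_smul_left, real_inner_smul_left, real_inner_smul_left,
      real_inner_self_eq_norm_sq, real_inner_self_eq_norm_sq,
      real_inner_comm (mto9 R) (mto9 S)]
    ring
  rw [hE]
  exact key9 ((1:ℝ)/n) (fnorm S) (fnorm R) (fnorm (S - R)) (finner S R)
    hp0 hp1 ha hb hc hw t1 t2 t3 hpy
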